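/- For every pair of parameters w₀, γ ∈ ℝ there exists a solution with parameters (w₀,γ), and it is unique: any two continuously differentiable functions w₁, w₂ : [0,∞) → ℝ with w₁(0) = w₂(0) = w₀ and (σ²/2)·wᵢ′(x) + π(wᵢ(x)) + h(x) = γ for all x ≥ 0 coincide on [0,∞). -/

import Mathlib

open Set MeasureTheory Filter Topology
open scoped NNReal

/-- `piU U c w = min_{μ ∈ U} (μ·w + c(μ))`, realized as an infimum. -/
noncomputable def piU (U : Set ℝ) (c : ℝ → ℝ) (w : ℝ) : ℝ :=
  sInf ((fun μ => μ * w + c μ) '' U)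

/-- `w` is a continuously differentiable solution on `[0,∞)` of
`(σ²/2)·w′(x) + π(w(x)) + h(x) = γ` with `w(0) = w₀`, with derivative `w'`. -/
def IsSolution (σ : ℝ) (U : Set ℝ) (c h : ℝ → ℝ) (w₀ γ : ℝ) (w w' : ℝ → ℝ) : Prop :=
  w 0 = w₀ ∧ ContinuousOn w' (Set.Ici 0) ∧
  (∀ x ∈ Set.Ici (0:ℝ), HasDerivWithinAt w (w' x) (Set.Ici 0) x) ∧
  (∀ x ∈ Set.Ici (0:ℝ), σ ^ 2 / 2 * w' x + piU U c (w x) + h x = γ)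

private lemma piU_le_add {U : Set ℝ} (hUne : U.Nonempty) (hUcpt : IsCompact U)
    {c : ℝ → ℝ} (hc : Continuous c) {L : ℝ} (hL : ∀ μ ∈ U, |μ| ≤ L)
    (w₁ w₂ : ℝ) : piU U c w₁ ≤ piU U c w₂ + L * |w₁ - w₂| := by
  have hbdd : BddBelow ((fun μ => μ * w₁ + c μ) '' U) :=
    (hUcpt.image (by continuity)).bddBelow
  have key : piU U c w₁ - L * |w₁ - w₂| ≤ piU U c w₂ := by
    apply le_csInf (hUne.image _)
    rintro b ⟨μ, hμ, rfl⟩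
    simp only []
    have h1 : piU U c w₁ ≤ μ * w₁ + c μ := csInf_le hbdd (mem_image_of_mem _ hμ)
    have h2 : μ * w₁ - μ * w₂ ≤ L * |w₁ - w₂| := by
      calc μ * w₁ - μ * w₂ = μ * (w₁ - w₂) := by ring
        _ ≤ |μ * (w₁ - w₂)| := le_abs_self _
        _ = |μ| * |w₁ - w₂| := abs_mul _ _
        _ ≤ L * |w₁ - w₂| := by
            exact mul_le_mul_of_nonneg_right (hL μ hμ) (abs_nonneg _)
    linarith
  linarith

private lemma piU_lipschitz {U : Set ℝ} (hUne : U.Nonempty) (hUcpt : IsCompact U)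
    {c : ℝ → ℝ} (hc : Continuous c) {L : ℝ≥0} (hL : ∀ μ ∈ U, |μ| ≤ (L : ℝ)) :
    LipschitzWith L (piU U c) := by
  apply LipschitzWith.of_dist_le_mul
  intro x y
  rw [Real.dist_eq, Real.dist_eq, abs_sub_le_iff]
  constructor
  · have := piU_le_add hUne hUcpt hc hL x y
    linarith
  · have := piU_le_add hUne hUcpt hc hL y x
    rw [abs_sub_comm] at this
    linarith

private lemma hasDerivWithinAt_singleton' (f : ℝ → ℝ) (x d : ℝ) :
    HasDerivWithinAt f d {x} x :=
  HasFDerivWithinAt.of_not_accPt (by rw [accPt_principal_iff_nhdsWithin]; simp)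

private lemma hasDerivWithinAt_of_nmem_closure' {f : ℝ → ℝ} {x d : ℝ} {s : Set ℝ}
    (h : x ∉ closure s) : HasDerivWithinAt f d s x :=
  HasFDerivWithinAt.of_notMem_closure h

private lemma derivIci {f : ℝ → ℝ} {d t T : ℝ}
    (ht : 0 ≤ t) (htT : t < T) (h : HasDerivWithinAt f d (Icc 0 T) t) :
    HasDerivWithinAt f d (Ici t) t :=
  h.mono_of_mem_nhdsWithin (mem_nhdsWithin.2
    ⟨Iio T, isOpen_Iio, htT, fun y hy => ⟨ht.trans hy.2, hy.1.le⟩⟩)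

private lemma step_exists {v : ℝ → ℝ → ℝ} {K : ℝ≥0} (hlip : ∀ t, LipschitzWith K (v t))
    (hcont : ∀ x, Continuous fun t => v t x) {τ : ℝ} (hτ : 0 < τ)
    (hKτ : (K : ℝ) * (2 * τ) ≤ 1) (a x₀ : ℝ) :
    ∃ f : ℝ → ℝ, f a = x₀ ∧
      ∀ t ∈ Icc a (a + τ), HasDerivWithinAt f (v t (f t)) (Icc a (a + τ)) t := by
  obtain ⟨M₀, hM₀⟩ := (isCompact_Icc (a := a) (b := a + τ)).exists_bound_of_continuousOn
    ((hcont x₀).continuousOn)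
  set M : ℝ := max M₀ 0 + 1 with hM
  have hMpos : 0 < M := by positivity
  have hM₀M : M₀ ≤ M := by
    have := le_max_left M₀ 0; linarith
  have hpl : IsPicardLindelof v (tmin := a) (tmax := a + τ) ⟨a, le_refl a, by linarith⟩ x₀
      ⟨2 * τ * M, by positivity⟩ 0 ⟨2 * M, by positivity⟩ K :=
    { lipschitzOnWith := fun t _ => (hlip t).lipschitzOnWith
      continuousOn := fun x _ => (hcont x).continuousOn
      norm_le := by
        intro t ht x hx
        have h1 : dist (v t x) (v t x₀) ≤ (K : ℝ) * dist x x₀ := (hlip t).dist_le_mul x x₀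
        have h2 : dist x x₀ ≤ 2 * τ * M := Metric.mem_closedBall.1 hx
        have h3 : ‖v t x₀‖ ≤ M₀ := hM₀ t ht
        have h4 : (K : ℝ) * (2 * τ * M) ≤ M := by
          nlinarith [mul_nonneg (sub_nonneg.2 hKτ) hMpos.le]
        have h5 : (K : ℝ) * dist x x₀ ≤ (K : ℝ) * (2 * τ * M) :=
          mul_le_mul_of_nonneg_left h2 K.coe_nonneg
        have h6 : ‖v t x‖ ≤ ‖v t x - v t x₀‖ + ‖v t x₀‖ := by
          simpa using norm_add_le (v t x - v t x₀) (v t x₀)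
        rw [dist_eq_norm] at h1
        show ‖v t x‖ ≤ 2 * M
        linarith
      mul_max_le := by
        simp only [NNReal.coe_zero, sub_zero, tsub_zero]
        show 2 * M * max (a + τ - a) (a - a) ≤ 2 * τ * M
        rw [add_sub_cancel_left, sub_self, max_eq_left hτ.le]
        nlinarith }
  obtain ⟨α, hα0, hαd⟩ := hpl.exists_eq_forall_mem_Icc_hasDerivWithinAt₀
  exact ⟨α, hα0, hαd⟩

private lemma global_exists {v : ℝ → ℝ → ℝ} {K : ℝ≥0} (hlip : ∀ t, LipschitzWith K (v t))
    (hcont : ∀ x, Continuous fun t => v t x) {τ : ℝ} (hτ : 0 < τ)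
    (hKτ : (K : ℝ) * (2 * τ) ≤ 1) (w₀ : ℝ) (n : ℕ) :
    ∃ f : ℝ → ℝ, f 0 = w₀ ∧
      ∀ t ∈ Icc 0 ((n : ℝ) * τ), HasDerivWithinAt f (v t (f t)) (Icc 0 ((n : ℝ) * τ)) t := by
  induction n with
  | zero =>
    refine ⟨fun _ => w₀, rfl, ?_⟩
    intro t ht
    simp only [Nat.cast_zero, zero_mul, Icc_self, mem_singleton_iff] at ht
    subst ht
    simpa using hasDerivWithinAt_singleton' (fun _ => w₀) 0 (v 0 w₀)
  | succ n ih =>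
    obtain ⟨f, hf0, hf⟩ := ih
    set b : ℝ := (n : ℝ) * τ with hb
    have hb0 : 0 ≤ b := by positivity
    obtain ⟨g, hg0, hg⟩ := step_exists hlip hcont hτ hKτ b (f b)
    have hbb : ((n : ℝ) + 1) * τ = b + τ := by ring
    rw [Nat.cast_add, Nat.cast_one, hbb]
    set fg : ℝ → ℝ := fun t => if t ≤ b then f t else g t with hfg
    have hfg_f : ∀ s ∈ Icc (0 : ℝ) b, fg s = f s := by
      intro s hs; simp only [hfg]; rw [if_pos hs.2]
    have hfg_g : ∀ s ∈ Icc b (b + τ), fg s = g s := by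
      intro s hs
      simp only [hfg]
      by_cases hsb : s ≤ b
      · have : s = b := le_antisymm hsb hs.1
        rw [if_pos hsb, this, hg0]
      · rw [if_neg hsb]
    refine ⟨fg, ?_, ?_⟩
    · rw [hfg_f 0 ⟨le_refl 0, hb0⟩, hf0]
    · intro t ht
      have hA : HasDerivWithinAt fg (v t (fg t)) (Icc 0 b) t := by
        by_cases htb : t ≤ b
        · have h1 := hf t ⟨ht.1, htb⟩
          have h2 : fg t = f t := hfg_f t ⟨ht.1, htb⟩
          rw [h2]
          exact h1.congr hfg_f h2
        · apply hasDerivWithinAt_of_nmem_closure'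
          rw [isClosed_Icc.closure_eq]
          exact fun hmem => htb hmem.2
      have hB : HasDerivWithinAt fg (v t (fg t)) (Icc b (b + τ)) t := by
        by_cases htb : b ≤ t
        · have h1 := hg t ⟨htb, ht.2⟩
          have h2 : fg t = g t := hfg_g t ⟨htb, ht.2⟩
          rw [h2]
          exact h1.congr hfg_g h2
        · apply hasDerivWithinAt_of_nmem_closure'
          rw [isClosed_Icc.closure_eq]
          exact fun hmem => htb hmem.1
      refine (hA.union hB).mono ?_
      intro y hy
      by_cases hyb : y ≤ b
      · exact Or.inl ⟨hy.1, hyb⟩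
      · exact Or.inr ⟨le_of_not_ge hyb, hy.2⟩

theorem stmt_3 (σ : ℝ) (hσ : 0 < σ) (U : Set ℝ) (hUne : U.Nonempty) (hUcpt : IsCompact U)
    (c : ℝ → ℝ) (hc : Continuous c) (h : ℝ → ℝ)
    (hhcont : ContinuousOn h (Set.Ici 0)) (hhmono : StrictMonoOn h (Set.Ici 0))
    (hh0 : h 0 = 0) (hhtop : Filter.Tendsto h Filter.atTop Filter.atTop)
    (w₀ γ : ℝ) :
    (∃ w w' : ℝ → ℝ, IsSolution σ U c h w₀ γ w w') ∧
    (∀ w₁ w₁' w₂ w₂' : ℝ → ℝ, IsSolution σ U c h w₀ γ w₁ w₁' →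
      IsSolution σ U c h w₀ γ w₂ w₂' → ∀ x : ℝ, 0 ≤ x → w₁ x = w₂ x) := by
  have hσ2 : σ ^ 2 ≠ 0 := by positivity
  -- the extended h
  set H : ℝ → ℝ := fun t => h (max t 0) with hH
  have Hcont : Continuous H :=
    hhcont.comp_continuous (continuous_id.max continuous_const) (fun x => le_max_right x 0)
  have Heq : ∀ t : ℝ, 0 ≤ t → H t = h t := by
    intro t ht; simp only [hH]; rw [max_eq_left ht]
  -- Lipschitz constant for piU
  obtain ⟨L₀, hL₀⟩ := hUcpt.exists_bound_of_continuousOn continuous_id.continuousOn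
  set L : ℝ≥0 := ⟨max L₀ 0, le_max_right _ _⟩ with hLdef
  have hL : ∀ μ ∈ U, |μ| ≤ (L : ℝ) := by
    intro μ hμ
    have := hL₀ μ hμ
    simp only [id, Real.norm_eq_abs] at this
    exact this.trans (le_max_left _ _)
  have hπlip : LipschitzWith L (piU U c) := piU_lipschitz hUne hUcpt hc hL
  have hπcont : Continuous (piU U c) := hπlip.continuous
  -- the vector field
  set k : ℝ := 2 / σ ^ 2 with hk
  set v : ℝ → ℝ → ℝ := fun t x => k * (γ - H t - piU U c x) with hv
  set K : ℝ≥0 := ⟨|k|, abs_nonneg k⟩ * L with hKdef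
  have vlip : ∀ t, LipschitzWith K (v t) := by
    intro t
    apply LipschitzWith.of_dist_le_mul
    intro x y
    have h1 : v t x - v t y = k * (piU U c y - piU U c x) := by simp only [hv]; ring
    have h2 : dist (piU U c x) (piU U c y) ≤ (L : ℝ) * dist x y := hπlip.dist_le_mul x y
    rw [Real.dist_eq, Real.dist_eq] at h2 ⊢
    rw [h1, abs_mul]
    have h3 : |piU U c y - piU U c x| ≤ (L : ℝ) * |x - y| := by rw [abs_sub_comm]; exact h2
    calc |k| * |piU U c y - piU U c x| ≤ |k| * ((L : ℝ) * |x - y|) :=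
          mul_le_mul_of_nonneg_left h3 (abs_nonneg k)
      _ = (K : ℝ) * |x - y| := by
          simp only [hKdef, NNReal.coe_mul, NNReal.coe_mk]; change _ = (|k| * (L : ℝ)) * |x - y|; ring
  have vcont : ∀ x, Continuous fun t => v t x := by
    intro x
    simp only [hv]
    exact continuous_const.mul ((continuous_const.sub Hcont).sub continuous_const)
  -- choice of step size
  set τ : ℝ := 1 / (2 * ((K : ℝ) + 1)) with hτdef
  have hKpos : (0 : ℝ) < (K : ℝ) + 1 := by positivity
  have hτ : 0 < τ := by positivity
  have hKτ : (K : ℝ) * (2 * τ) ≤ 1 := by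
    have h2τ : 2 * τ = ((K : ℝ) + 1)⁻¹ := by
      rw [hτdef]; field_simp
    rw [h2τ]
    rw [mul_inv_le_iff₀' hKpos]
    linarith
  -- the family of solutions on [0, n τ]
  choose F hF0 hFd using global_exists vlip vcont hτ hKτ w₀
  -- uniqueness on compact intervals, general form
  have uniq : ∀ (f g : ℝ → ℝ) (b : ℝ), ContinuousOn f (Icc 0 b) → ContinuousOn g (Icc 0 b) →
      (∀ t ∈ Ico (0:ℝ) b, HasDerivWithinAt f (v t (f t)) (Ici t) t) →
      (∀ t ∈ Ico (0:ℝ) b, HasDerivWithinAt g (v t (g t)) (Ici t) t) →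
      f 0 = g 0 → ∀ t ∈ Icc (0:ℝ) b, f t = g t := by
    intro f g b hfc hgc hfd hgd h0
    exact ODE_solution_unique vlip hfc hfd hgc hgd h0
  -- continuity of each F n on Icc 0 (n τ)
  have hFc : ∀ n : ℕ, ContinuousOn (F n) (Icc 0 ((n : ℝ) * τ)) := by
    intro n t ht
    exact (hFd n t ht).continuousWithinAt
  -- consistency
  have hcons : ∀ (m n : ℕ), (n : ℝ) * τ ≤ (m : ℝ) * τ →
      ∀ t ∈ Icc (0:ℝ) ((n : ℝ) * τ), F m t = F n t := by
    intro m n hmn t ht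
    refine uniq (F m) (F n) ((n : ℝ) * τ) ((hFc m).mono (Icc_subset_Icc_right hmn))
      (hFc n) ?_ ?_ (by rw [hF0, hF0]) t ht
    · intro s hs
      exact derivIci hs.1 (hs.2.trans_le hmn) (hFd m s ⟨hs.1, (hs.2.trans_le hmn).le⟩)
    · intro s hs
      exact derivIci hs.1 hs.2 (hFd n s ⟨hs.1, hs.2.le⟩)
  -- the global solution
  set N : ℝ → ℕ := fun t => ⌈t / τ⌉₊ + 1 with hNdef
  have hN : ∀ t : ℝ, 0 ≤ t → t < (N t : ℝ) * τ := by
    intro t ht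
    have h1 : t / τ ≤ (⌈t / τ⌉₊ : ℝ) := Nat.le_ceil _
    have h2 : t / τ < (N t : ℝ) := by
      simp only [hNdef]; push_cast; linarith
    calc t = t / τ * τ := by field_simp
      _ < (N t : ℝ) * τ := by exact mul_lt_mul_of_pos_right h2 hτ
  set w : ℝ → ℝ := fun t => F (N t) t with hw
  have hwn : ∀ (n : ℕ) (t : ℝ), t ∈ Icc 0 ((n : ℝ) * τ) → w t = F n t := by
    intro n t ht
    simp only [hw]
    rcases le_total ((n : ℝ) * τ) ((N t : ℝ) * τ) with hle | hle
    · exact hcons (N t) n hle t ht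
    · exact (hcons n (N t) hle t ⟨ht.1, (hN t ht.1).le⟩).symm
  have hw0 : w 0 = w₀ := by simp only [hw]; exact hF0 (N 0)
  have hwderiv : ∀ t ∈ Ici (0:ℝ), HasDerivWithinAt w (v t (w t)) (Ici 0) t := by
    intro t ht
    have htN := hN t ht
    have hd := hFd (N t) t ⟨ht, htN.le⟩
    have hmem : Icc (0:ℝ) ((N t : ℝ) * τ) ∈ 𝓝[Ici (0:ℝ)] t :=
      mem_nhdsWithin.2 ⟨Iio ((N t : ℝ) * τ), isOpen_Iio, htN, fun y hy => ⟨hy.2, hy.1.le⟩⟩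
    have hd' : HasDerivWithinAt (F (N t)) (v t (F (N t) t)) (Ici 0) t :=
      hd.mono_of_mem_nhdsWithin hmem
    have heq : w =ᶠ[𝓝[Ici (0:ℝ)] t] F (N t) :=
      Filter.eventuallyEq_of_mem hmem (hwn (N t))
    have hwt : w t = F (N t) t := rfl
    rw [hwt]
    exact hd'.congr_of_eventuallyEq heq hwt
  have hwcont : ContinuousOn w (Ici (0:ℝ)) := fun t ht => (hwderiv t ht).continuousWithinAt
  constructor
  · -- existence
    refine ⟨w, fun t => v t (w t), hw0, ?_, hwderiv, ?_⟩
    · have hcn : ContinuousOn (fun t => k * (γ - H t - piU U c (w t))) (Ici (0:ℝ)) :=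
        continuousOn_const.mul (((continuous_const.sub Hcont).continuousOn).sub
          (hπcont.comp_continuousOn hwcont))
      simpa only [hv] using hcn
    · intro x hx
      have hHx : H x = h x := Heq x hx
      simp only [hv, hk, hHx]
      field_simp
      ring
  · -- uniqueness
    intro w₁ w₁' w₂ w₂' hs1 hs2 x hx
    obtain ⟨h10, h1c, h1d, h1e⟩ := hs1
    obtain ⟨h20, h2c, h2d, h2e⟩ := hs2
    have key : ∀ (u : ℝ → ℝ) (u' : ℝ → ℝ),
        (∀ y ∈ Ici (0:ℝ), HasDerivWithinAt u (u' y) (Ici 0) y) →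
        (∀ y ∈ Ici (0:ℝ), σ ^ 2 / 2 * u' y + piU U c (u y) + h y = γ) →
        ∀ t ∈ Ico (0:ℝ) x, HasDerivWithinAt u (v t (u t)) (Ici t) t := by
      intro u u' hud hue t htx
      have ht : t ∈ Ici (0:ℝ) := htx.1
      have heqn := hue t ht
      have hut : u' t = v t (u t) := by
        have hHt : H t = h t := Heq t ht
        simp only [hv, hk, hHt]
        field_simp at heqn ⊢
        linarith
      rw [← hut]
      exact (hud t ht).mono (Ici_subset_Ici.2 ht)
    have h1ci : ContinuousOn w₁ (Ici (0:ℝ)) := fun t ht => (h1d t ht).continuousWithinAt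
    have h2ci : ContinuousOn w₂ (Ici (0:ℝ)) := fun t ht => (h2d t ht).continuousWithinAt
    have h1cx : ContinuousOn w₁ (Icc 0 x) := h1ci.mono Icc_subset_Ici_self
    have h2cx : ContinuousOn w₂ (Icc 0 x) := h2ci.mono Icc_subset_Ici_self
    exact uniq w₁ w₂ x h1cx h2cx (key w₁ w₁' h1d h1e) (key w₂ w₂' h2d h2e)
      (by rw [h10, h20]) x ⟨hx, le_refl x⟩
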